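/- For each n ≥ 1, let ε_{S,n} = 2·binom(n−1,S)/(∑_{k=0}^S binom(n,k)) be the minimal variation of probability measures at scale S on the hypercube Q_n. Then for every fixed S ≥ 0, lim_{n→∞} ε_{S,n} = 2. Consequently, the disjoint union of all hypercubes ∐_n Q_n (with ℓ^1 metric) fails property A: lim_{S→∞} limsup_n ε_{S,n} = 2 ≠ 0. -/

import Mathlib

open Filter Finset

private lemma aux_ratio (i : ℕ) :
    Filter.Tendsto (fun n : ℕ => ((n : ℝ) - i) / n) Filter.atTop (nhds 1) := by
  have h0 : Filter.Tendsto (fun n : ℕ => (i : ℝ) / n) Filter.atTop (nhds 0) :=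
    tendsto_const_div_atTop_nhds_zero_nat (i : ℝ)
  have h1 : Filter.Tendsto (fun n : ℕ => 1 - (i : ℝ) / n) Filter.atTop (nhds (1 - 0)) :=
    tendsto_const_nhds.sub h0
  rw [sub_zero] at h1
  refine h1.congr' ?_
  filter_upwards [eventually_gt_atTop 0] with n hn
  have hne : (n : ℝ) ≠ 0 := Nat.cast_ne_zero.2 hn.ne'
  field_simp

/-- `choose n k / n^k → 1/k!`. -/
private lemma aux_choose (k : ℕ) :
    Filter.Tendsto (fun n : ℕ => ((n.choose k : ℝ)) / (n : ℝ) ^ k) Filter.atTop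
      (nhds (1 / (k.factorial : ℝ))) := by
  have hprod : Filter.Tendsto (fun n : ℕ => ∏ i ∈ Finset.range k, ((n : ℝ) - i) / n)
      Filter.atTop (nhds 1) := by
    have := tendsto_finset_prod (f := fun (i : ℕ) (n : ℕ) => ((n : ℝ) - i) / n)
      (x := Filter.atTop) (a := fun _ => 1) (Finset.range k) (fun i _ => aux_ratio i)
    simpa using this
  have h2 : Filter.Tendsto
      (fun n : ℕ => (1 / (k.factorial : ℝ)) * ∏ i ∈ Finset.range k, ((n : ℝ) - i) / n)
      Filter.atTop (nhds ((1 / (k.factorial : ℝ)) * 1)) := hprod.const_mul _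
  rw [mul_one] at h2
  refine h2.congr' ?_
  filter_upwards [eventually_ge_atTop (max k 1)] with n hn
  have hk : k ≤ n := le_trans (le_max_left _ _) hn
  have hn1 : 1 ≤ n := le_trans (le_max_right _ _) hn
  have hne : (n : ℝ) ≠ 0 := Nat.cast_ne_zero.2 (by omega)
  have hfac : ((k.factorial : ℝ)) ≠ 0 := Nat.cast_ne_zero.2 k.factorial_ne_zero
  have hdesc : ((n.descFactorial k : ℝ)) = (k.factorial : ℝ) * (n.choose k : ℝ) := by
    rw [← Nat.cast_mul, Nat.descFactorial_eq_factorial_mul_choose]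
  have hdesc2 : ((n.descFactorial k : ℝ)) = ∏ i ∈ Finset.range k, ((n : ℝ) - i) := by
    rw [Nat.descFactorial_eq_prod_range, Nat.cast_prod]
    refine Finset.prod_congr rfl fun i hi => ?_
    have : i ≤ n := le_trans (le_of_lt (Finset.mem_range.1 hi)) hk
    rw [Nat.cast_sub this]
  rw [Finset.prod_div_distrib, Finset.prod_const, ← hdesc2, hdesc]
  field_simp
  rw [Finset.card_range]

/-- `choose n k / n^S → 0` when `k < S`. -/
private lemma aux_choose_small (k S : ℕ) (hkS : k < S) :
    Filter.Tendsto (fun n : ℕ => ((n.choose k : ℝ)) / (n : ℝ) ^ S) Filter.atTop (nhds 0) := by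
  refine squeeze_zero' ?_ ?_ (tendsto_one_div_atTop_nhds_zero_nat)
  · filter_upwards with n
    positivity
  · filter_upwards [eventually_ge_atTop 1] with n hn
    have hnpos : (0 : ℝ) < (n : ℝ) := by exact_mod_cast hn
    rw [div_le_div_iff₀ (by positivity) hnpos, one_mul]
    calc ((n.choose k : ℝ)) * n ≤ (n : ℝ) ^ k * n := by
          have := Nat.choose_le_pow n k
          have : ((n.choose k : ℝ)) ≤ (n : ℝ) ^ k := by exact_mod_cast this
          exact mul_le_mul_of_nonneg_right this hnpos.le
      _ = (n : ℝ) ^ (k + 1) := by ring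
      _ ≤ (n : ℝ) ^ S := by
          refine pow_le_pow_right₀ (by exact_mod_cast hn) ?_
          omega

theorem stmt19
    (ε : ℕ → ℕ → ℝ)
    (hε : ∀ S n, ε S n
      = 2 * ((n - 1).choose S : ℝ) / ∑ k ∈ Finset.range (S + 1), (n.choose k : ℝ)) :
    (∀ S : ℕ, Filter.Tendsto (fun n : ℕ => ε S n) Filter.atTop (nhds 2))
    ∧ (∀ S : ℕ, Filter.limsup (fun n : ℕ => ε S n) Filter.atTop = 2)
    ∧ Filter.Tendsto (fun S : ℕ => Filter.limsup (fun n : ℕ => ε S n) Filter.atTop)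
        Filter.atTop (nhds 2)
    ∧ (2 : ℝ) ≠ 0 := by
  have main : ∀ S : ℕ, Filter.Tendsto (fun n : ℕ => ε S n) Filter.atTop (nhds 2) := by
    intro S
    have hfac : ((S.factorial : ℝ)) ≠ 0 := Nat.cast_ne_zero.2 S.factorial_ne_zero
    -- numerator: choose (n-1) S / n^S → 1/S!
    have hnum : Filter.Tendsto (fun n : ℕ => (((n - 1).choose S : ℝ)) / (n : ℝ) ^ S)
        Filter.atTop (nhds (1 / (S.factorial : ℝ))) := by
      have hcomp : Filter.Tendsto (fun n : ℕ => (((n - 1).choose S : ℝ)) / ((n - 1 : ℕ) : ℝ) ^ S)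
          Filter.atTop (nhds (1 / (S.factorial : ℝ))) :=
        (aux_choose S).comp (tendsto_sub_atTop_nat 1)
      have hpow : Filter.Tendsto (fun n : ℕ => (((n - 1 : ℕ) : ℝ) / (n : ℝ)) ^ S)
          Filter.atTop (nhds 1) := by
        have h1 : Filter.Tendsto (fun n : ℕ => ((n - 1 : ℕ) : ℝ) / (n : ℝ))
            Filter.atTop (nhds 1) := by
          refine (aux_ratio 1).congr' ?_
          filter_upwards [eventually_ge_atTop 1] with n hn
          rw [Nat.cast_sub hn, Nat.cast_one]
        simpa using h1.pow S
      have := hcomp.mul hpow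
      rw [mul_one] at this
      refine this.congr' ?_
      filter_upwards [eventually_ge_atTop 2] with n hn
      have hc : ((n - 1 : ℕ) : ℝ) = (n : ℝ) - 1 := by
        rw [Nat.cast_sub (by omega), Nat.cast_one]
      have hne : (n : ℝ) - 1 ≠ 0 := by
        have : (2 : ℝ) ≤ (n : ℝ) := by exact_mod_cast hn
        nlinarith
      have hne2 : (n : ℝ) ≠ 0 := Nat.cast_ne_zero.2 (by omega)
      simp only [hc]
      field_simp
      rw [div_pow, mul_assoc, div_mul_cancel₀ _ (pow_ne_zero _ hne2)]
    -- denominator: ∑ choose n k / n^S → 1/S!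
    have hden : Filter.Tendsto
        (fun n : ℕ => (∑ k ∈ Finset.range (S + 1), (n.choose k : ℝ)) / (n : ℝ) ^ S)
        Filter.atTop (nhds (1 / (S.factorial : ℝ))) := by
      have heach : ∀ k ∈ Finset.range (S + 1),
          Filter.Tendsto (fun n : ℕ => ((n.choose k : ℝ)) / (n : ℝ) ^ S) Filter.atTop
            (nhds (if k = S then 1 / (S.factorial : ℝ) else 0)) := by
        intro k hk
        rcases eq_or_lt_of_le (Nat.lt_succ_iff.1 (Finset.mem_range.1 hk)) with h | h
        · subst h; simpa [one_div] using aux_choose k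
        · simp only [if_neg (Nat.ne_of_lt h)]
          exact aux_choose_small k S h
      have hsum := tendsto_finset_sum (Finset.range (S + 1)) heach
      have hval : (∑ k ∈ Finset.range (S + 1),
          if k = S then 1 / (S.factorial : ℝ) else 0) = 1 / (S.factorial : ℝ) := by
        rw [Finset.sum_ite_eq' (Finset.range (S + 1)) S fun _ => 1 / (S.factorial : ℝ)]
        simp
      rw [hval] at hsum
      refine hsum.congr fun n => ?_
      rw [Finset.sum_div]
    have hdiv := (hnum.const_mul 2).div hden (by positivity)
    have hval : 2 * (1 / (S.factorial : ℝ)) / (1 / (S.factorial : ℝ)) = 2 := by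
      field_simp
    rw [hval] at hdiv
    refine hdiv.congr' ?_
    filter_upwards [eventually_ge_atTop 1] with n hn
    have hne : (n : ℝ) ^ S ≠ 0 := by
      have : (n : ℝ) ≠ 0 := Nat.cast_ne_zero.2 (by omega)
      positivity
    have hsumpos : (0 : ℝ) < ∑ k ∈ Finset.range (S + 1), (n.choose k : ℝ) := by
      refine Finset.sum_pos' (fun k _ => by positivity) ⟨0, by simp, by simp⟩
    rw [hε S n]
    field_simp
    simp only [Pi.div_apply]
    field_simp
  have hlimsup : ∀ S : ℕ, Filter.limsup (fun n : ℕ => ε S n) Filter.atTop = 2 :=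
    fun S => (main S).limsup_eq
  refine ⟨main, hlimsup, ?_, two_ne_zero⟩
  simp only [hlimsup]
  exact tendsto_const_nhds
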